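/- Let f_102 be the local rule f_102(a,b,c) = b + c. For every integer n ≥ 1 and all a, b ∈ Q, the transition functions (f_102)_{(n),a-b} and (f_102)_{(n),*-b} on Q^n are bijective; that is, CA-102_{a-b}(n) and CA-102_{*-b}(n) are reversible for all positive integers n. -/
import Mathlib


/-- The state set `Q = {0,1}` as `ZMod 2`. -/
abbrev Q : Type := ZMod 2

/-- A triplet local rule `f : Q³ → Q`. -/
abbrev Rule : Type := Q → Q → Q → Q

/-- A configuration of length `n`. -/
abbrev Config (n : ℕ) : Type := Fin n → Q

/-- The transition sending `x` to the word whose `i`-th letter is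
`f (x (i-1)) (x i) (x (i+1))`, where the virtual boundary letters
`x₀` and `x_{n+1}` are given as `x0` and `xn1`. -/
def caTrans {n : ℕ} (f : Rule) (x0 xn1 : Q) (x : Config n) : Config n :=
  fun i =>
    f (if _h : i.1 = 0 then x0
       else x ⟨i.1 - 1, Nat.lt_of_le_of_lt (Nat.sub_le _ _) i.isLt⟩)
      (x i)
      (if h : i.1 + 1 < n then x ⟨i.1 + 1, h⟩ else xn1)

/-- The first letter `x₁` of a nonempty configuration. -/
def firstCell {n : ℕ} (hn : 0 < n) (x : Config n) : Q := x ⟨0, hn⟩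

/-- The last letter `xₙ` of a nonempty configuration. -/
def lastCell {n : ℕ} (hn : 0 < n) (x : Config n) : Q :=
  x ⟨n - 1, Nat.sub_lt hn Nat.one_pos⟩

/-- Fixed boundary `a-b` : `x₀ = a`, `x_{n+1} = b`. -/
def fixedBC {n : ℕ} (f : Rule) (a b : Q) : Config n → Config n :=
  fun x => caTrans f a b x

/-- Boundary `a-*` : `x₀ = a`, `x_{n+1} = xₙ`. -/
def leftFixedBC {n : ℕ} (hn : 0 < n) (f : Rule) (a : Q) : Config n → Config n :=
  fun x => caTrans f a (lastCell hn x) x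

/-- Boundary `*-b` : `x₀ = x₁`, `x_{n+1} = b`. -/
def rightFixedBC {n : ℕ} (hn : 0 < n) (f : Rule) (b : Q) : Config n → Config n :=
  fun x => caTrans f (firstCell hn x) b x

/-- Free boundary `*-*` : `x₀ = x₁`, `x_{n+1} = xₙ`. -/
def freeBC {n : ℕ} (hn : 0 < n) (f : Rule) : Config n → Config n :=
  fun x => caTrans f (firstCell hn x) (lastCell hn x) x

/-- Cyclic boundary `*` : `x₀ = xₙ`, `x_{n+1} = x₁`. -/
def cyclicBC {n : ℕ} (hn : 0 < n) (f : Rule) : Config n → Config n :=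
  fun x => caTrans f (lastCell hn x) (firstCell hn x) x

/-- Rule 102 : `f(a,b,c) = b + c`. -/
def f102 : Rule := fun _ b c => b + c


lemma surj102 (n : ℕ) (b c : Q) :
    Function.Surjective (fun x : Config n => caTrans f102 c b x) := by
  intro y
  set Y : ℕ → Q := fun j => if h : j < n then y ⟨j, h⟩ else 0 with hY
  refine ⟨fun i => b + ∑ j ∈ Finset.Ico i.1 n, Y j, ?_⟩
  funext i
  show f102 _ _ _ = y i
  have hYi : Y i.1 = y i := by simp [hY, i.isLt]
  simp only [f102, caTrans]
  have hsum : ∑ j ∈ Finset.Ico i.1 n, Y j = Y i.1 + ∑ j ∈ Finset.Ico (i.1 + 1) n, Y j :=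
    Finset.sum_eq_sum_Ico_succ_bot i.isLt Y
  by_cases h : i.1 + 1 < n
  · rw [dif_pos h, hsum]
    rw [← hYi]
    ring_nf
    simp [CharTwo.two_eq_zero]
  · rw [dif_neg h]
    have : Finset.Ico (i.1 + 1) n = ∅ := by
      refine Finset.Ico_eq_empty ?_
      omega
    rw [hsum, this, Finset.sum_empty, ← hYi]
    ring_nf
    simp [CharTwo.two_eq_zero]

theorem statement12 (n : ℕ) (hn : 1 ≤ n) (a b : Q) :
    Function.Bijective (fixedBC (n := n) f102 a b) ∧
    Function.Bijective (rightFixedBC hn f102 b) := by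
  have h1 : Function.Bijective (fixedBC (n := n) f102 a b) :=
    Finite.surjective_iff_bijective.mp (surj102 n b a)
  have heq : rightFixedBC hn f102 b = fixedBC (n := n) f102 a b := rfl
  exact ⟨h1, heq ▸ h1⟩
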